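/- arXiv:0812.2505 — 2 statements merged into one kernel-verified Lean document; each statement's English description precedes it below -/
import Mathlib

section
/- Let T₁ be the unique 2-dimensional simple kS₄-module, let t ∈ S₄ be any transposition, and let C = ⟨t⟩ be the subgroup of order 2 it generates. Then the restriction Res^{S₄}_C T₁ is a free kC-module of rank 1. -/
/-! Shared definitions: representations of a group over a commutative ring,
equivariant maps, sub/quotient representations, projectivity, syzygies,
stable endomorphism rings, Ext^1 dimensions, induced/restricted representations,
Witt vectors, lifts and universal deformation rings. -/

open scoped TensorProduct

noncomputable section

/-- A representation of the group `G` on a module over the commutative ring `R`,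
bundled with its carrier.  For `R = k` a field this is the same data as a
`kG`-module. -/
structure GRep (R : Type) [CommRing R] (G : Type) [Group G] : Type 1 where
  V : Type
  [acg : AddCommGroup V]
  [mod : Module R V]
  ρ : Representation R G V

attribute [instance] GRep.acg GRep.mod

namespace GRep

variable {R : Type} [CommRing R] {G : Type} [Group G]

/-- `f` is a homomorphism of representations (i.e. a `RG`-module homomorphism). -/
def IsRepHom (M N : GRep R G) (f : M.V →ₗ[R] N.V) : Prop :=
  ∀ g : G, f.comp (M.ρ g) = (N.ρ g).comp f

/-- `M` and `N` are isomorphic representations (i.e. isomorphic `RG`-modules). -/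
def IsoRep (M N : GRep R G) : Prop :=
  ∃ e : M.V ≃ₗ[R] N.V, IsRepHom M N (e : M.V →ₗ[R] N.V)

/-- An `R`-submodule is a subrepresentation if it is stable under the `G`-action. -/
def IsSubrep (M : GRep R G) (N : Submodule R M.V) : Prop :=
  ∀ (g : G) (x : M.V), x ∈ N → M.ρ g x ∈ N

open Classical in
/-- The subrepresentation on a `G`-stable submodule (trivial action as a junk
value if `N` is not `G`-stable). -/
def sub (M : GRep R G) (N : Submodule R M.V) : GRep R G where
  V := ↥N
  ρ := if h : IsSubrep M N then
    { toFun := fun g => (M.ρ g).restrict (fun x hx => h g x hx)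
      map_one' := by
        ext x
        simp [LinearMap.restrict_apply]
      map_mul' := fun g₁ g₂ => by
        ext x
        simp [LinearMap.restrict_apply] }
    else 1

open Classical in
/-- The quotient representation on `M.V ⧸ N` (trivial action as a junk value if
`N` is not `G`-stable). -/
def quot (M : GRep R G) (N : Submodule R M.V) : GRep R G where
  V := M.V ⧸ N
  ρ := if h : IsSubrep M N then
    { toFun := fun g => Submodule.mapQ N N (M.ρ g) (fun x hx => h g x hx)
      map_one' := by
        apply Submodule.linearMap_qext
        ext x
        simp
      map_mul' := fun g₁ g₂ => by
        apply Submodule.linearMap_qext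
        ext x
        simp }
    else 1

/-- The direct sum of two representations. -/
def prod (M N : GRep R G) : GRep R G where
  V := M.V × N.V
  ρ := {
    toFun := fun g => (M.ρ g).prodMap (N.ρ g)
    map_one' := by ext x <;> simp
    map_mul' := fun g₁ g₂ => by ext x <;> simp }

/-- The restriction of a representation of `G` to a subgroup `L`. -/
def res (L : Subgroup G) (M : GRep R G) : GRep R ↥L where
  V := M.V
  ρ := M.ρ.comp L.subtype

/-- A representation is projective if the corresponding module over the group
algebra `R[G]` is projective. -/
def IsProjectiveRep (M : GRep R G) : Prop :=
  Module.Projective (MonoidAlgebra R G) M.ρ.asModule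

/-- A representation is simple (irreducible) if it is nonzero and its only
subrepresentations are `⊥` and `⊤`. -/
def IsSimpleRep (M : GRep R G) : Prop :=
  Nontrivial M.V ∧ ∀ N : Submodule R M.V, IsSubrep M N → N = ⊥ ∨ N = ⊤

/-- A representation is indecomposable if it is nonzero and admits no nontrivial
direct sum decomposition into subrepresentations. -/
def IsIndecomposableRep (M : GRep R G) : Prop :=
  Nontrivial M.V ∧ ∀ N₁ N₂ : Submodule R M.V, IsSubrep M N₁ → IsSubrep M N₂ →
    IsCompl N₁ N₂ → N₁ = ⊥ ∨ N₂ = ⊥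

/-- The trivial one-dimensional representation of `G` over `R`. -/
def triv (R : Type) [CommRing R] (G : Type) [Group G] : GRep R G where
  V := R
  ρ := 1

/-- The regular representation `R[G]`. -/
def reg (R : Type) [CommRing R] (G : Type) [Group G] : GRep R G where
  V := G →₀ R
  ρ := {
    toFun := fun g => Finsupp.lmapDomain R R (g • ·)
    map_one' := by ext; simp
    map_mul' := fun x y => by ext; simp [mul_assoc] }

/-- The representation on `Hom_k(M.V, N.V)` given by conjugation
(`End_k(V)` for `M = N`). -/
def linHom (M N : GRep R G) : GRep R G where
  V := M.V →ₗ[R] N.V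
  ρ := M.ρ.linHom N.ρ

/-- The `R`-submodule of `RG`-module homomorphisms `M → N`. -/
def homSub (M N : GRep R G) : Submodule R (M.V →ₗ[R] N.V) where
  carrier := {f | IsRepHom M N f}
  add_mem' := by
    intro f₁ f₂ h₁ h₂ g
    simp only [LinearMap.add_comp, LinearMap.comp_add, h₁ g, h₂ g]
  zero_mem' := by
    intro g
    simp
  smul_mem' := by
    intro c f h g
    simp only [LinearMap.smul_comp, LinearMap.comp_smul, h g]

/-- `f : M → N` factors through a projective `RG`-module. -/
def FactorsThruProj (M N : GRep R G) (f : M.V →ₗ[R] N.V) : Prop :=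
  ∃ P : GRep R G, IsProjectiveRep P ∧
    ∃ (a : M.V →ₗ[R] P.V) (b : P.V →ₗ[R] N.V),
      IsRepHom M P a ∧ IsRepHom P N b ∧ b.comp a = f

/-- The stable endomorphism ring `End_{kG}(M)/(proj)` is equal to `k`:
the identity does not factor through a projective module, and every
endomorphism is congruent to a scalar modulo endomorphisms factoring
through projectives. -/
def HasStableEndoK (M : GRep R G) : Prop :=
  (¬ FactorsThruProj M M LinearMap.id) ∧
  ∀ f : M.V →ₗ[R] M.V, IsRepHom M M f →
    ∃ c : R, FactorsThruProj M M (f - c • LinearMap.id)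

/-- `N` is a (first) syzygy `Ω M` of `M`: the kernel of a projective cover of `M`. -/
def IsSyzygy (M N : GRep R G) : Prop :=
  ∃ (P : GRep R G) (π : P.V →ₗ[R] M.V),
    IsProjectiveRep P ∧ IsRepHom P M π ∧ Function.Surjective π ∧
    (∀ Q : Submodule R P.V, IsSubrep P Q → Q ⊔ LinearMap.ker π = ⊤ → Q = ⊤) ∧
    IsoRep (P.sub (LinearMap.ker π)) N

/-- `N` is an `n`-th syzygy `Ω^n M` of `M`. -/
def IsNthSyzygy : ℕ → GRep R G → GRep R G → Prop
  | 0, M, N => IsoRep M N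
  | n + 1, M, N => ∃ M' : GRep R G, IsSyzygy M M' ∧ IsNthSyzygy n M' N

/-- `dim_k Ext^1_{kG}(M, N) = d`, expressed via an arbitrary projective
presentation `0 → K → P → M → 0` as
`dim Hom_{kG}(K, N) = d + dim (image of Hom_{kG}(P, N) → Hom_{kG}(K, N))`. -/
def Ext1DimEq (M N : GRep R G) (d : ℕ) : Prop :=
  ∀ (P : GRep R G) (π : P.V →ₗ[R] M.V),
    IsProjectiveRep P → IsRepHom P M π → Function.Surjective π →
    Module.finrank R ↥(homSub (P.sub (LinearMap.ker π)) N) =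
      d + Module.finrank R
        ↥(Submodule.map (LinearMap.lcomp R N.V (LinearMap.ker π).subtype) (homSub P N))

/-- `Ext^1_{kG}(A, B) = 0`: every short exact sequence `0 → B → E → A → 0` splits. -/
def Ext1Vanishes (A B : GRep R G) : Prop :=
  ∀ (E : GRep R G) (i : B.V →ₗ[R] E.V) (pr : E.V →ₗ[R] A.V),
    IsRepHom B E i → IsRepHom E A pr → Function.Injective i → Function.Surjective pr →
    LinearMap.range i = LinearMap.ker pr →
    ∃ s : A.V →ₗ[R] E.V, IsRepHom A E s ∧ pr.comp s = LinearMap.id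

/-- The data of a non-split short exact sequence `0 → B → E → A → 0` of
`RG`-modules. -/
def IsNonSplitSES (A B E : GRep R G) (i : B.V →ₗ[R] E.V) (pr : E.V →ₗ[R] A.V) : Prop :=
  IsRepHom B E i ∧ IsRepHom E A pr ∧ Function.Injective i ∧ Function.Surjective pr ∧
  LinearMap.range i = LinearMap.ker pr ∧
  ¬ ∃ s : A.V →ₗ[R] E.V, IsRepHom A E s ∧ pr.comp s = LinearMap.id

/-- The carrier of the representation of `G` induced from a representation `U` of
a subgroup `L` (realized, as usual for finite groups, as the space of
`U`-valued functions `f` on `G` with `f(lg) = l • f(g)`, with `G` acting by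
right translation). -/
def indCarrier (L : Subgroup G) (U : GRep R ↥L) : Submodule R (G → U.V) where
  carrier := {f | ∀ (l : ↥L) (g : G), f ((l : G) * g) = U.ρ l (f g)}
  add_mem' := by
    intro f₁ f₂ h₁ h₂ l g
    simp [h₁ l g, h₂ l g]
  zero_mem' := by
    intro l g
    simp
  smul_mem' := by
    intro c f h l g
    simp [h l g]

/-- The representation of `G` induced from a representation `U` of the subgroup `L`. -/
def ind (L : Subgroup G) (U : GRep R ↥L) : GRep R G where
  V := ↥(indCarrier L U)
  ρ := {
    toFun := fun x =>
      { toFun := fun f => ⟨fun g => (f : G → U.V) (g * x), by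
          intro l g
          have h := f.property l (g * x)
          simpa [mul_assoc] using h⟩
        map_add' := fun f₁ f₂ => by
          apply Subtype.ext
          funext g
          simp
        map_smul' := fun c f => by
          apply Subtype.ext
          funext g
          simp }
    map_one' := by
      refine LinearMap.ext fun f => Subtype.ext (funext fun g => ?_)
      simp
    map_mul' := fun x y => by
      refine LinearMap.ext fun f => Subtype.ext (funext fun g => ?_)
      simp [mul_assoc] }

/-- Base change of a representation along `R → S`. -/
def baseChange (S : Type) [CommRing S] [Algebra R S] (M : GRep R G) : GRep S G where
  V := S ⊗[R] M.V
  ρ := (Module.End.baseChangeHom R S M.V).toRingHom.toMonoidHom.comp M.ρ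

end GRep




/-- The inflation of a representation of `H` along a group homomorphism `G →* H`. -/
def GRep.infl {R : Type} [CommRing R] {G H : Type} [Group G] [Group H]
    (φ : G →* H) (M : GRep R H) : GRep R G where
  V := M.V
  ρ := M.ρ.comp φ

/-! ### Universal deformation rings -/

/-- The canonical residue map `W(k) → k` (the zeroth component). -/
def wres (p : ℕ) [Fact p.Prime] (k : Type) [CommRing k] : WittVector p k →+* k :=
  WittVector.ghostComponent 0

/-- An object of the category `Ĉ`: a complete local commutative Noetherian
`W(k)`-algebra with residue field `k` (the residue field identification is
recorded by the surjection `res`, whose kernel is the maximal ideal, and is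
required to be compatible with the canonical residue map of `W(k)`). -/
structure DefRing (p : ℕ) [Fact p.Prime] (k : Type) [Field k] : Type 1 where
  R : Type
  [cr : CommRing R]
  [alg : Algebra (WittVector p k) R]
  noeth : IsNoetherianRing R
  isLocal : IsLocalRing R
  res : R →+* k
  res_surjective : Function.Surjective res
  ker_nonunits : ∀ x ∈ RingHom.ker res, ¬ IsUnit x
  complete : IsAdicComplete (RingHom.ker res) R
  res_algebraMap : ∀ w, res (algebraMap (WittVector p k) R w) = wres p k w

attribute [instance] DefRing.cr DefRing.alg

/-- A morphism in the category `Ĉ`: a (local) `W(k)`-algebra homomorphism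
inducing the identity on the residue field `k`. -/
@[ext]
structure DefHom {p : ℕ} [Fact p.Prime] {k : Type} [Field k] (A B : DefRing p k) where
  toRingHom : A.R →+* B.R
  algebraMap_comp : ∀ w, toRingHom (algebraMap (WittVector p k) A.R w)
    = algebraMap (WittVector p k) B.R w
  res_comp : ∀ x, B.res (toRingHom x) = A.res x

/-- A lift of the `kG`-module `M` over `A ∈ Ĉ`: a finitely generated free
`A`-module `X` with an action of `G`, together with an identification of
`k ⊗_A X` with `M` (recorded by the `A.res`-semilinear, `G`-equivariant
surjection `red : X → M.V` whose kernel is `m_A · X`). -/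
structure Lift {p : ℕ} [Fact p.Prime] {k : Type} [Field k] (A : DefRing p k)
    {G : Type} [Group G] (M : GRep k G) : Type 1 where
  X : Type
  [acg : AddCommGroup X]
  [mod : Module A.R X]
  free : Module.Free A.R X
  fin : Module.Finite A.R X
  ρ : Representation A.R G X
  red : X →+ M.V
  red_surjective : Function.Surjective red
  red_smul : ∀ (a : A.R) (x : X), red (a • x) = A.res a • red x
  red_ker : ∀ x : X, red x = 0 ↔ x ∈ (RingHom.ker A.res) • (⊤ : Submodule A.R X)
  red_equivariant : ∀ (g : G) (x : X), red (ρ g x) = M.ρ g (red x)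

attribute [instance] Lift.acg Lift.mod

/-- The lift `L` over `B` is (isomorphic to) the pushforward of the lift `U`
over `A` along `α : A → B`. -/
def Lift.PushesTo {p : ℕ} [Fact p.Prime] {k : Type} [Field k] {A B : DefRing p k}
    {G : Type} [Group G] {M : GRep k G} (α : DefHom A B) (U : Lift A M) (L : Lift B M) :
    Prop :=
  ∃ f : U.X →+ L.X,
    (∀ (a : A.R) (x : U.X), f (a • x) = α.toRingHom a • f x) ∧
    (∀ (g : G) (x : U.X), f (U.ρ g x) = L.ρ g (f x)) ∧
    (∀ x, L.red (f x) = U.red x) ∧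
    Submodule.span B.R (Set.range f) = ⊤

/-- `(𝓡, U)` is a universal deformation of `M`: every lift of `M` over every
`A ∈ Ĉ` arises from `U` via a unique morphism `𝓡 → A`. -/
def IsUniversalLift {p : ℕ} [Fact p.Prime] {k : Type} [Field k]
    {G : Type} [Group G] {M : GRep k G} (𝓡 : DefRing p k) (U : Lift 𝓡 M) : Prop :=
  ∀ (A : DefRing p k) (L : Lift A M), ∃! α : DefHom 𝓡 A, Lift.PushesTo α U L

/-- `M` has a universal deformation ring. -/
def HasUniversalDefRing (p : ℕ) [Fact p.Prime] (k : Type) [Field k]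
    {G : Type} [Group G] (M : GRep k G) : Prop :=
  ∃ (𝓡 : DefRing p k) (U : Lift 𝓡 M), IsUniversalLift 𝓡 U

/-- Two objects of `Ĉ` are isomorphic as `W(k)`-algebras. -/
def DefRingIso {p : ℕ} [Fact p.Prime] {k : Type} [Field k] (A B : DefRing p k) : Prop :=
  ∃ e : A.R ≃+* B.R, ∀ w,
    e (algebraMap (WittVector p k) A.R w) = algebraMap (WittVector p k) B.R w

/-- `A ∈ Ĉ` is isomorphic, as a `W(k)`-algebra, to the ring `S` whose
`W(k)`-algebra structure is given by `f`. -/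
def DefRingIsoTo {p : ℕ} [Fact p.Prime] {k : Type} [Field k] (A : DefRing p k)
    (S : Type) [CommRing S] (f : WittVector p k →+* S) : Prop :=
  ∃ e : A.R ≃+* S, ∀ w, e (algebraMap (WittVector p k) A.R w) = f w

/-- A `W(k)G`-module, finitely generated and free over `W(k)`, defining a lift of
the `kG`-module `M` over `W = W(k)`; i.e. `k ⊗_W X ≅ M` (recorded by the
residue-semilinear, `G`-equivariant surjection `red` with kernel `p·X`). -/
structure WLift (p : ℕ) [Fact p.Prime] (k : Type) [Field k]
    {G : Type} [Group G] (M : GRep k G) : Type 1 where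
  XR : GRep (WittVector p k) G
  free : Module.Free (WittVector p k) XR.V
  fin : Module.Finite (WittVector p k) XR.V
  red : XR.V →+ M.V
  red_surjective : Function.Surjective red
  red_smul : ∀ (a : WittVector p k) (x : XR.V), red (a • x) = wres p k a • red x
  red_ker : ∀ x : XR.V, red x = 0 ↔ ∃ y : XR.V, x = (p : WittVector p k) • y
  red_equivariant : ∀ (g : G) (x : XR.V), red (XR.ρ g x) = M.ρ g (red x)

instance : Fact (Nat.Prime 2) := ⟨Nat.prime_two⟩

/-- In a module over a field of characteristic 2, negation is the identity. -/
lemma char2_neg {k : Type} [Field k] [CharP k 2] {W : Type} [AddCommGroup W] [Module k W]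
    (x : W) : -x = x := by
  have h2 : (2 : k) = 0 := by exact_mod_cast CharP.cast_eq_zero k 2
  have hxx : x + x = 0 := by
    have h : (2 : k) • x = 0 := by rw [h2, zero_smul]
    rwa [two_smul] at h
  exact neg_eq_of_add_eq_zero_left hxx

/-- The restriction of the unique 2-dimensional simple `kS₄`-module
`T₁` to the subgroup `C` generated by any transposition is a free `kC`-module of
rank 1. -/
theorem statement_13 (k : Type) [Field k] [IsAlgClosed k] [CharP k 2]
    (T₁ : GRep k (Equiv.Perm (Fin 4))) (hsimp : GRep.IsSimpleRep T₁)
    (hdim : Module.finrank k T₁.V = 2)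
    (t : Equiv.Perm (Fin 4)) (ht : t.IsSwap) :
    GRep.IsoRep (GRep.res (Subgroup.zpowers t) T₁)
      (GRep.reg k ↥(Subgroup.zpowers t)) := by
  classical
  obtain ⟨x0, y0, hxy0, ht_eq⟩ := ht
  have htt : t * t = 1 := by rw [ht_eq]; exact Equiv.swap_mul_self _ _
  have hfd : Module.Finite k T₁.V := Module.finite_of_finrank_eq_succ hdim
  -- ρ t is an involution
  have h2 : ∀ x : T₁.V, T₁.ρ t (T₁.ρ t x) = x := by
    intro x
    have h : T₁.ρ t * T₁.ρ t = 1 := by rw [← map_mul, htt, map_one]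
    calc T₁.ρ t (T₁.ρ t x) = (T₁.ρ t * T₁.ρ t) x := rfl
      _ = x := by rw [h]; rfl
  -- char 2 facts
  have hneg : ∀ x : T₁.V, -x = x := fun x => char2_neg (k := k) x
  -- t acts nontrivially
  have hex : ∃ v : T₁.V, T₁.ρ t v ≠ v := by
    by_contra h
    push_neg at h
    -- the kernel subgroup contains t, hence all swaps, hence everything
    have hconj : ∀ g σ : Equiv.Perm (Fin 4), (∀ x : T₁.V, T₁.ρ σ x = x) →
        ∀ x : T₁.V, T₁.ρ (g * σ * g⁻¹) x = x := by
      intro g σ hσ x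
      have e1 : T₁.ρ (g * σ * g⁻¹) x = T₁.ρ g (T₁.ρ σ (T₁.ρ g⁻¹ x)) := by
        rw [map_mul, map_mul]; rfl
      rw [e1, hσ]
      calc T₁.ρ g (T₁.ρ g⁻¹ x) = (T₁.ρ g * T₁.ρ g⁻¹) x := rfl
        _ = T₁.ρ (g * g⁻¹) x := by rw [map_mul]
        _ = x := by rw [mul_inv_cancel, map_one]; rfl
    set K : Subgroup (Equiv.Perm (Fin 4)) :=
      { carrier := {g | ∀ x : T₁.V, T₁.ρ g x = x}
        one_mem' := fun x => by rw [map_one]; rfl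
        mul_mem' := by
          intro a b ha hb x
          rw [map_mul]
          calc (T₁.ρ a * T₁.ρ b) x = T₁.ρ a (T₁.ρ b x) := rfl
            _ = x := by rw [hb, ha]
        inv_mem' := by
          intro a ha x
          calc T₁.ρ a⁻¹ x = T₁.ρ a⁻¹ (T₁.ρ a x) := by rw [ha]
            _ = (T₁.ρ a⁻¹ * T₁.ρ a) x := rfl
            _ = x := by rw [← map_mul, inv_mul_cancel, map_one]; rfl } with hK
    have hswaps : {σ : Equiv.Perm (Fin 4) | σ.IsSwap} ⊆ K := by
      intro σ hσ
      obtain ⟨a, b, hab, rfl⟩ := hσ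
      obtain ⟨c, hc⟩ := isConj_iff.mp (Equiv.Perm.isConj_swap hxy0 hab)
      intro x
      rw [← hc, ← ht_eq]
      exact hconj c t h x
    have htop : (⊤ : Subgroup (Equiv.Perm (Fin 4))) ≤ K := by
      rw [← Equiv.Perm.closure_isSwap]
      exact (Subgroup.closure_le K).mpr hswaps
    have htriv : ∀ (g : Equiv.Perm (Fin 4)) (x : T₁.V), T₁.ρ g x = x :=
      fun g x => htop (Subgroup.mem_top g) x
    -- contradiction with simplicity
    obtain ⟨hnt, hmax⟩ := hsimp
    obtain ⟨v, hv⟩ := exists_ne (0 : T₁.V)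
    have hsub : GRep.IsSubrep T₁ (Submodule.span k {v}) := by
      intro g x hx
      rw [htriv g x]; exact hx
    rcases hmax _ hsub with hbot | htop'
    · exact hv (by simpa [hbot] using Submodule.mem_span_singleton_self (R := k) v)
    · have h1 : Module.finrank k ↥(Submodule.span k {v}) = 1 :=
        finrank_span_singleton hv
      rw [htop', finrank_top, hdim] at h1
      exact (by norm_num : (2:ℕ) ≠ 1) h1
  obtain ⟨v, hv⟩ := hex
  set w : T₁.V := T₁.ρ t v - v with hw_def
  have hw : w ≠ 0 := sub_ne_zero.mpr hv
  have hρv : T₁.ρ t v = v + w := by rw [hw_def]; abel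
  have hρw : T₁.ρ t w = w := by
    have h' : T₁.ρ t w = -w := by
      rw [hw_def, map_sub, h2, hρv]; abel
    rw [h', hneg]
  have hww : w + w = 0 := by
    have := hneg w
    rw [neg_eq_iff_add_eq_zero] at this
    exact this
  have hρvw : T₁.ρ t (v + w) = v := by
    rw [map_add, hρv, hρw, add_assoc, hww, add_zero]
  -- linear independence of v, v + w
  have hli : LinearIndependent k ![v, v + w] := by
    rw [LinearIndependent.pair_iff]
    intro s u hsu
    have h1 : (s + u) • v + u • w = 0 := by
      rw [add_smul, smul_add] at *
      calc s • v + u • v + u • w = s • v + (u • v + u • w) := by abel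
        _ = 0 := hsu
    -- apply (ρ t - 1)
    have h2' : (s + u) • w = 0 := by
      have := congrArg (fun x => T₁.ρ t x - x) h1
      simp only [map_add, map_smul, hρv, hρw, map_zero] at this
      calc (s + u) • w = (s + u) • (v + w) + u • w - ((s + u) • v + u • w) := by
            rw [smul_add]; abel
        _ = 0 := by rw [this]; rw [sub_self]
    have hsu0 : s + u = 0 := by
      rcases smul_eq_zero.mp h2' with h | h
      · exact h
      · exact absurd h hw
    have hu0 : u = 0 := by
      have hv0 : (s + u) • v = 0 := by rw [hsu0, zero_smul]
      have : u • w = 0 := by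
        calc u • w = (s + u) • v + u • w - (s + u) • v := by abel
          _ = 0 := by rw [h1, hv0, sub_zero]
      rcases smul_eq_zero.mp this with h | h
      · exact h
      · exact absurd h hw
    constructor
    · have := hsu0; rw [hu0, add_zero] at this; exact this
    · exact hu0
  have hcard : Fintype.card (Fin 2) = Module.finrank k T₁.V := by
    simp [hdim]
  set B := basisOfLinearIndependentOfCardEqFinrank hli hcard with hB
  have hB0 : B 0 = v := by
    rw [hB, coe_basisOfLinearIndependentOfCardEqFinrank]; rfl
  have hB1 : B 1 = v + w := by
    rw [hB, coe_basisOfLinearIndependentOfCardEqFinrank]; rfl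
  -- the subgroup C
  set C := Subgroup.zpowers t with hC
  have hτmem : t ∈ C := Subgroup.mem_zpowers t
  set τ : ↥C := ⟨t, hτmem⟩ with hτ
  have ht1 : t ≠ 1 := by
    intro h
    apply hv
    rw [h, map_one]; rfl
  have hττ : τ * τ = 1 := by
    apply Subtype.ext
    exact htt
  have hcases : ∀ c : ↥C, c = 1 ∨ c = τ := by
    intro c
    obtain ⟨n, hn⟩ := Subgroup.mem_zpowers_iff.mp c.2
    have h2z : t ^ (2:ℤ) = 1 := by
      rw [show (2:ℤ) = ((2:ℕ):ℤ) from rfl, zpow_natCast, pow_two, htt]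
    rcases Int.even_or_odd n with ⟨m, hm⟩ | ⟨m, hm⟩
    · left
      apply Subtype.ext
      have : t ^ n = 1 := by
        rw [hm, ← two_mul, zpow_mul, h2z, one_zpow]
      rw [← hn, this]; rfl
    · right
      apply Subtype.ext
      have : t ^ n = t := by
        rw [hm, zpow_add, zpow_mul, h2z, one_zpow, one_mul, zpow_one]
      rw [← hn, this]
  -- basis of the regular representation
  have hτ1 : τ ≠ 1 := fun h => ht1 (congrArg Subtype.val h)
  set e2 : Fin 2 ≃ ↥C :=
    { toFun := ![1, τ]
      invFun := fun c => if c = 1 then 0 else 1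
      left_inv := by
        intro i
        fin_cases i
        · simp
        · simp [hτ1]
      right_inv := by
        intro c
        rcases hcases c with rfl | rfl
        · simp
        · simp [hτ1] } with he2
  set B' : Module.Basis (Fin 2) k (↥C →₀ k) := (Finsupp.basisSingleOne).reindex e2.symm with hB'
  have hB'0 : B' 0 = Finsupp.single 1 1 := by
    rw [hB', Module.Basis.reindex_apply, Equiv.symm_symm]
    rfl
  have hB'1 : B' 1 = Finsupp.single τ 1 := by
    rw [hB', Module.Basis.reindex_apply, Equiv.symm_symm]
    rfl
  set e : T₁.V ≃ₗ[k] (↥C →₀ k) := B.equiv B' (Equiv.refl _) with he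
  have hev : e v = Finsupp.single 1 1 := by
    rw [← hB0, he, Module.Basis.equiv_apply, Equiv.refl_apply, hB'0]
  have hevw : e (v + w) = Finsupp.single τ 1 := by
    rw [← hB1, he, Module.Basis.equiv_apply, Equiv.refl_apply, hB'1]
  refine ⟨e, ?_⟩
  intro g
  have hMρ : ∀ (c : ↥C) (x : T₁.V),
      (GRep.res C T₁).ρ c x = T₁.ρ (c : Equiv.Perm (Fin 4)) x := fun c x => rfl
  rcases hcases g with rfl | rfl
  · apply LinearMap.ext
    intro x
    simp only [LinearMap.comp_apply, map_one]
    rfl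
  · apply Module.Basis.ext B
    intro i
    fin_cases i
    · show e ((GRep.res C T₁).ρ τ (B 0)) = (GRep.reg k ↥C).ρ τ (e (B 0))
      rw [hB0, hMρ, hev, hρv, hevw]
      show _ = Finsupp.lmapDomain k k (τ • ·) (Finsupp.single 1 1)
      rw [Finsupp.lmapDomain_apply, Finsupp.mapDomain_single, smul_eq_mul, mul_one]
    · show e ((GRep.res C T₁).ρ τ (B 1)) = (GRep.reg k ↥C).ρ τ (e (B 1))
      rw [hB1, hMρ, hρvw, hev, hevw]
      show _ = Finsupp.lmapDomain k k (τ • ·) (Finsupp.single τ 1)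
      rw [Finsupp.lmapDomain_apply, Finsupp.mapDomain_single, smul_eq_mul, hττ]
end
end

section
/- Let A₄ ≤ S₄ be the alternating group and let E be any non-trivial one-dimensional kA₄-module. Then the induced module Ind_{A₄}^{S₄} E is isomorphic to T₁, the unique 2-dimensional simple kS₄-module. -/
/-! Shared definitions: representations of a group over a commutative ring,
equivariant maps, sub/quotient representations, projectivity, syzygies,
stable endomorphism rings, Ext^1 dimensions, induced/restricted representations,
Witt vectors, lifts and universal deformation rings. -/

open scoped TensorProduct

noncomputable section

open Equiv Equiv.Perm

namespace GRep
variable {R : Type} [CommRing R] {G : Type} [Group G]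

lemma ρ_mul_apply (M : GRep R G) (a b : G) (x : M.V) :
    M.ρ (a * b) x = M.ρ a (M.ρ b x) := by rw [map_mul]; rfl

lemma ρ_inv_cancel (M : GRep R G) (a : G) (x : M.V) :
    M.ρ a (M.ρ a⁻¹ x) = x := by
  rw [← ρ_mul_apply, mul_inv_cancel]; simp

lemma ρ_inv_cancel' (M : GRep R G) (a : G) (x : M.V) :
    M.ρ a⁻¹ (M.ρ a x) = x := by
  rw [← ρ_mul_apply, inv_mul_cancel]; simp

lemma isRepHom_of_closure (M N : GRep R G) (f : M.V →ₗ[R] N.V) (S : Set G)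
    (hS : Subgroup.closure S = ⊤)
    (h : ∀ g ∈ S, ∀ x, f (M.ρ g x) = N.ρ g (f x)) : IsRepHom M N f := by
  have key : ∀ g : G, (∀ x, f (M.ρ g x) = N.ρ g (f x)) := by
    intro g
    have hg : g ∈ Subgroup.closure S := hS ▸ Subgroup.mem_top g
    induction hg using Subgroup.closure_induction with
    | mem x hx => exact h x hx
    | one => intro x; simp
    | mul a b _ _ ha hb => intro x; rw [ρ_mul_apply, ha, hb, ρ_mul_apply]
    | inv a _ ha =>
      intro x
      have h1 : f x = N.ρ a (f (M.ρ a⁻¹ x)) := by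
        conv_lhs => rw [← ρ_inv_cancel M a x, ha]
      have := congrArg (N.ρ a⁻¹) h1
      rw [ρ_inv_cancel'] at this
      exact this.symm
  intro g
  ext x
  exact key g x

lemma isSubrep_of_closure (M : GRep R G) (W : Submodule R M.V) (S : Set G)
    (hS : Subgroup.closure S = ⊤)
    (h : ∀ g ∈ S, ∀ x ∈ W, M.ρ g x ∈ W)
    (h' : ∀ g ∈ S, ∀ x ∈ W, M.ρ g⁻¹ x ∈ W) : IsSubrep M W := by
  have key : ∀ g : G, (∀ x ∈ W, M.ρ g x ∈ W) ∧ (∀ x ∈ W, M.ρ g⁻¹ x ∈ W) := by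
    intro g
    have hg : g ∈ Subgroup.closure S := hS ▸ Subgroup.mem_top g
    induction hg using Subgroup.closure_induction with
    | mem x hx => exact ⟨h x hx, h' x hx⟩
    | one => constructor <;> (intro x hx; simpa using hx)
    | mul a b _ _ ha hb =>
      constructor
      · intro x hx
        rw [ρ_mul_apply]; exact ha.1 _ (hb.1 x hx)
      · intro x hx
        rw [mul_inv_rev, ρ_mul_apply]; exact hb.2 _ (ha.2 x hx)
    | inv a _ ha =>
      refine ⟨ha.2, ?_⟩
      intro x hx
      rw [inv_inv]; exact ha.1 x hx
  intro g x hx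
  exact (key g).1 x hx

end GRep

def tt : Equiv.Perm (Fin 4) := Equiv.swap 0 1
def sp : Equiv.Perm (Fin 4) := Equiv.swap 1 2 * Equiv.swap 2 3
def dd1 : Equiv.Perm (Fin 4) := Equiv.swap 0 1 * Equiv.swap 2 3
def dd2 : Equiv.Perm (Fin 4) := Equiv.swap 0 2 * Equiv.swap 1 3

lemma closure_sp_tt : Subgroup.closure ({sp, tt} : Set (Equiv.Perm (Fin 4))) = ⊤ := by
  have h4 : Subgroup.closure ({finRotate 4, Equiv.swap 0 (finRotate 4 0)} :
      Set (Equiv.Perm (Fin 4))) = ⊤ :=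
    Equiv.Perm.closure_cycle_adjacent_swap isCycle_finRotate support_finRotate 0
  rw [eq_top_iff, ← h4, Subgroup.closure_le]
  intro x hx
  rcases hx with h | h
  · have : finRotate 4 = tt * sp := by decide
    rw [h, this]
    exact mul_mem (Subgroup.subset_closure (by simp)) (Subgroup.subset_closure (by simp))
  · simp only [Set.mem_singleton_iff] at h
    have : Equiv.swap (0 : Fin 4) (finRotate 4 0) = tt := by decide
    rw [h, this]
    exact Subgroup.subset_closure (by simp)

open Module

section T1
variable {k : Type} [Field k] [CharP k 2]

lemma neg_self_char2 {V : Type} [AddCommGroup V] [Module k V] (v : V) : -v = v := by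
  have h : (-1 : k) = 1 := CharTwo.neg_eq 1
  rw [← one_smul k v, ← neg_smul, h, one_smul]

lemma T1_structure (T : GRep k (Equiv.Perm (Fin 4)))
    (hsimp : GRep.IsSimpleRep T) (h2 : finrank k T.V = 2) (ω : k) (hω1 : ω ≠ 1)
    (hω0 : ω ≠ 0) (hωq : ω ^ 2 + ω + 1 = 0) :
    ∃ v₁ v₂ : T.V, LinearIndependent k ![v₁, v₂] ∧ T.ρ sp v₁ = ω • v₁ ∧
      T.ρ sp v₂ = ω ^ 2 • v₂ ∧ T.ρ tt v₁ = v₂ ∧ T.ρ tt v₂ = v₁ := by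
  have hnt : Nontrivial T.V := hsimp.1
  have hsq : ∀ g : Equiv.Perm (Fin 4), g * g = 1 → ∀ x : T.V, T.ρ g (T.ρ g x) = x := by
    intro g hg x
    rw [← GRep.ρ_mul_apply, hg, map_one]; rfl
  -- common fixed vector of two commuting involutions
  have fix : ∀ P Q : Equiv.Perm (Fin 4), P * P = 1 → Q * Q = 1 → P * Q = Q * P →
      (∃ x : T.V, T.ρ P x ≠ x) → ∃ u : T.V, u ≠ 0 ∧ T.ρ P u = u ∧ T.ρ Q u = u := by
    intro P Q hP hQ hPQ ⟨x, hx⟩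
    set u₀ : T.V := T.ρ P x - x with hu₀def
    have hu₀ : u₀ ≠ 0 := sub_ne_zero.mpr hx
    have hPu₀ : T.ρ P u₀ = u₀ := by
      rw [hu₀def, map_sub, hsq P hP, ← neg_sub]
      exact neg_self_char2 (k := k) _
    have hPQu : T.ρ P (T.ρ Q u₀) = T.ρ Q u₀ := by
      rw [← GRep.ρ_mul_apply, hPQ, GRep.ρ_mul_apply, hPu₀]
    by_cases hq : T.ρ Q u₀ = u₀
    · exact ⟨u₀, hu₀, hPu₀, hq⟩
    · refine ⟨T.ρ Q u₀ - u₀, sub_ne_zero.mpr hq, ?_, ?_⟩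
      · rw [map_sub, hPQu, hPu₀]
      · rw [map_sub, hsq Q hQ, ← neg_sub]
        exact neg_self_char2 (k := k) _
  -- the Klein four group acts trivially
  have hV4 : ∀ x : T.V, T.ρ dd1 x = x ∧ T.ρ dd2 x = x := by
    set W : Submodule k T.V :=
      LinearMap.ker (T.ρ dd1 - (LinearMap.id : T.V →ₗ[k] T.V)) ⊓ LinearMap.ker (T.ρ dd2 - (LinearMap.id : T.V →ₗ[k] T.V)) with hWdef
    have hmem : ∀ x : T.V, x ∈ W ↔ T.ρ dd1 x = x ∧ T.ρ dd2 x = x := by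
      intro x
      simp [hWdef, Submodule.mem_inf, LinearMap.mem_ker, sub_eq_zero, LinearMap.sub_apply]
    have hd3 : ∀ x : T.V, x ∈ W → T.ρ (dd1 * dd2) x = x := by
      intro x hx
      rw [GRep.ρ_mul_apply, ((hmem x).mp hx).2, ((hmem x).mp hx).1]
    have hstep : ∀ g ∈ ({sp, tt} : Set (Equiv.Perm (Fin 4))), ∀ x ∈ W, T.ρ g x ∈ W := by
      intro g hg x hx
      obtain ⟨h1, h2⟩ := (hmem x).mp hx
      rcases hg with hg | hg
      · subst hg
        rw [hmem]
        constructor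
        · rw [← GRep.ρ_mul_apply, show dd1 * sp = sp * (dd1 * dd2) from by decide,
            GRep.ρ_mul_apply, hd3 x hx]
        · rw [← GRep.ρ_mul_apply, show dd2 * sp = sp * dd1 from by decide,
            GRep.ρ_mul_apply, h1]
      · simp only [Set.mem_singleton_iff] at hg
        subst hg
        rw [hmem]
        constructor
        · rw [← GRep.ρ_mul_apply, show dd1 * tt = tt * dd1 from by decide,
            GRep.ρ_mul_apply, h1]
        · rw [← GRep.ρ_mul_apply, show dd2 * tt = tt * (dd1 * dd2) from by decide,
            GRep.ρ_mul_apply, hd3 x hx]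
    have hsub : GRep.IsSubrep T W := by
      refine GRep.isSubrep_of_closure T W _ closure_sp_tt hstep ?_
      intro g hg x hx
      rcases hg with hg | hg
      · subst hg
        rw [show (sp⁻¹ : Equiv.Perm (Fin 4)) = sp * sp from by decide, GRep.ρ_mul_apply]
        exact hstep sp (by simp) _ (hstep sp (by simp) x hx)
      · simp only [Set.mem_singleton_iff] at hg
        subst hg
        rw [show (tt⁻¹ : Equiv.Perm (Fin 4)) = tt from by decide]
        exact hstep tt (by simp) x hx
    suffices hW : W = ⊤ by
      intro x
      exact (hmem x).mp (hW ▸ Submodule.mem_top)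
    rcases hsimp.2 W hsub with hW | hW
    · exfalso
      have hex : ∃ u : T.V, u ≠ 0 ∧ u ∈ W := by
        by_cases hd1 : ∀ x : T.V, T.ρ dd1 x = x
        · by_cases hd2 : ∀ x : T.V, T.ρ dd2 x = x
          · obtain ⟨u, hu⟩ := exists_ne (0 : T.V)
            exact ⟨u, hu, (hmem u).mpr ⟨hd1 u, hd2 u⟩⟩
          · push_neg at hd2
            obtain ⟨u, hu, hP, hQ⟩ := fix dd2 dd1 (by decide) (by decide) (by decide) hd2
            exact ⟨u, hu, (hmem u).mpr ⟨hQ, hP⟩⟩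
        · push_neg at hd1
          obtain ⟨u, hu, hP, hQ⟩ := fix dd1 dd2 (by decide) (by decide) (by decide) hd1
          exact ⟨u, hu, (hmem u).mpr ⟨hP, hQ⟩⟩
      obtain ⟨u, hu, huW⟩ := hex
      rw [hW] at huW
      exact hu (Submodule.mem_bot k |>.mp huW)
    · exact hW

  -- basic consequences
  have h2k : (2 : k) = 0 := CharTwo.two_eq_zero
  have hρtt2 : ∀ x : T.V, T.ρ tt (T.ρ tt x) = x := hsq tt (by decide)
  have hspcube : ∀ x : T.V, T.ρ sp (T.ρ sp (T.ρ sp x)) = x := by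
    intro x
    rw [← GRep.ρ_mul_apply, ← GRep.ρ_mul_apply, show sp * sp * sp = 1 from by decide,
      map_one]
    rfl
  have hst : ∀ x : T.V, T.ρ sp (T.ρ tt x) = T.ρ tt (T.ρ sp (T.ρ sp x)) := by
    intro x
    rw [← GRep.ρ_mul_apply, show sp * tt = tt * (dd2 * (sp * sp)) from by decide,
      GRep.ρ_mul_apply, GRep.ρ_mul_apply, (hV4 _).2, GRep.ρ_mul_apply]
  have h1ω : (1 : k) + ω ≠ 0 := by
    rw [show (1 : k) + ω = 1 - ω from by rw [sub_eq_add_neg, CharTwo.neg_eq]]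
    exact sub_ne_zero.mpr (Ne.symm hω1)
  -- sigma acts nontrivially
  have hσnotid : ¬ (∀ x : T.V, T.ρ sp x = x) := by
    intro hσid
    set Wt : Submodule k T.V := LinearMap.ker (T.ρ tt - (LinearMap.id : T.V →ₗ[k] T.V))
      with hWtdef
    have hmemt : ∀ x : T.V, x ∈ Wt ↔ T.ρ tt x = x := by
      intro x
      simp [hWtdef, LinearMap.mem_ker, sub_eq_zero, LinearMap.sub_apply]
    have hsubt : GRep.IsSubrep T Wt := by
      refine GRep.isSubrep_of_closure T Wt _ closure_sp_tt ?_ ?_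
      · intro g hg x hx
        rcases hg with hg | hg
        · subst hg
          rw [hσid x]; exact hx
        · simp only [Set.mem_singleton_iff] at hg
          subst hg
          rw [(hmemt x).mp hx]; exact hx
      · intro g hg x hx
        rcases hg with hg | hg
        · subst hg
          rw [show (sp⁻¹ : Equiv.Perm (Fin 4)) = sp * sp from by decide, GRep.ρ_mul_apply,
            hσid, hσid]
          exact hx
        · simp only [Set.mem_singleton_iff] at hg
          subst hg
          rw [show (tt⁻¹ : Equiv.Perm (Fin 4)) = tt from by decide, (hmemt x).mp hx]
          exact hx
    obtain ⟨x₀, hx₀⟩ := exists_ne (0 : T.V)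
    rcases hsimp.2 Wt hsubt with hWt | hWt
    · have hfix : ∀ x : T.V, T.ρ tt x = x := by
        intro x
        have : T.ρ tt x - x ∈ Wt := by
          rw [hmemt, map_sub, hρtt2, ← neg_sub]
          exact neg_self_char2 (k := k) _
        rw [hWt] at this
        have := (Submodule.mem_bot k).mp this
        rw [sub_eq_zero] at this
        exact this
      exact hx₀ ((Submodule.mem_bot k).mp (hWt ▸ (hmemt x₀).mpr (hfix x₀)))
    · -- everything acts trivially; a line is a proper subrep
      have httid : ∀ x : T.V, T.ρ tt x = x := fun x => (hmemt x).mp (hWt ▸ Submodule.mem_top)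
      set L : Submodule k T.V := Submodule.span k {x₀} with hLdef
      have hx₀L : x₀ ∈ L := Submodule.mem_span_singleton_self x₀
      have hsubL : GRep.IsSubrep T L := by
        refine GRep.isSubrep_of_closure T L _ closure_sp_tt ?_ ?_
        · intro g hg x hx
          rcases hg with hg | hg
          · subst hg
            rw [hσid x]; exact hx
          · simp only [Set.mem_singleton_iff] at hg
            subst hg
            rw [httid x]; exact hx
        · intro g hg x hx
          rcases hg with hg | hg
          · subst hg
            rw [show (sp⁻¹ : Equiv.Perm (Fin 4)) = sp * sp from by decide, GRep.ρ_mul_apply,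
              hσid, hσid]
            exact hx
          · simp only [Set.mem_singleton_iff] at hg
            subst hg
            rw [show (tt⁻¹ : Equiv.Perm (Fin 4)) = tt from by decide, httid x]
            exact hx
      rcases hsimp.2 L hsubL with hL | hL
      · exact hx₀ ((Submodule.mem_bot k).mp (hL ▸ hx₀L))
      · have hfr : finrank k L = 1 := finrank_span_singleton hx₀
        rw [hL, finrank_top, h2] at hfr
        exact absurd hfr (by norm_num)
  -- sigma has no nonzero fixed vectors
  have hWσ : ∀ x : T.V, T.ρ sp x = x → x = 0 := by
    set Wσ : Submodule k T.V := LinearMap.ker (T.ρ sp - (LinearMap.id : T.V →ₗ[k] T.V))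
      with hWσdef
    have hmemσ : ∀ x : T.V, x ∈ Wσ ↔ T.ρ sp x = x := by
      intro x
      simp [hWσdef, LinearMap.mem_ker, sub_eq_zero, LinearMap.sub_apply]
    have hsubσ : GRep.IsSubrep T Wσ := by
      refine GRep.isSubrep_of_closure T Wσ _ closure_sp_tt ?_ ?_
      · intro g hg x hx
        rcases hg with hg | hg
        · subst hg
          rw [hmemσ] at hx ⊢
          rw [hx]; exact hx
        · simp only [Set.mem_singleton_iff] at hg
          subst hg
          rw [hmemσ] at hx ⊢
          rw [hst, hx, hx]
      · intro g hg x hx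
        rcases hg with hg | hg
        · subst hg
          rw [hmemσ] at hx ⊢
          have h5 : T.ρ sp⁻¹ x = x := by
            conv_lhs => rw [← hx]
            exact GRep.ρ_inv_cancel' T sp x
          rw [h5]
          exact hx
        · simp only [Set.mem_singleton_iff] at hg
          subst hg
          rw [show (tt⁻¹ : Equiv.Perm (Fin 4)) = tt from by decide]
          rw [hmemσ] at hx ⊢
          rw [hst, hx, hx]
    intro x hx
    rcases hsimp.2 Wσ hsubσ with hWσt | hWσt
    · exact (Submodule.mem_bot k).mp (hWσt ▸ (hmemσ x).mpr hx)
    · exact absurd (fun y => (hmemσ y).mp (hWσt ▸ Submodule.mem_top)) hσnotid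
  -- quadratic relation for sigma
  have hquad : ∀ x : T.V, T.ρ sp (T.ρ sp x) = T.ρ sp x + x := by
    intro x
    have hz : T.ρ sp (T.ρ sp x) + (T.ρ sp x + x) = 0 := by
      apply hWσ
      rw [map_add, map_add, hspcube]
      abel
    have := eq_neg_of_add_eq_zero_left hz
    rw [this, neg_self_char2 (k := k)]
  -- eigenvector for omega
  obtain ⟨v₁, hv₁0, hv₁σ⟩ : ∃ v₁ : T.V, v₁ ≠ 0 ∧ T.ρ sp v₁ = ω • v₁ := by
    by_cases hcase : ∀ x : T.V, T.ρ sp x = ω ^ 2 • x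
    · exfalso
      obtain ⟨x₀, hx₀⟩ := exists_ne (0 : T.V)
      have hy0 : T.ρ tt x₀ ≠ 0 := by
        intro h
        apply hx₀
        have := congrArg (T.ρ tt) h
        rw [hρtt2, map_zero] at this
        exact this
      have heq : (ω ^ 2 - ω ^ 2 * ω ^ 2) • T.ρ tt x₀ = 0 := by
        have h1 := hst x₀
        rw [hcase (T.ρ tt x₀), hcase x₀, map_smul, hcase x₀, map_smul, map_smul,
          smul_smul] at h1
        rw [sub_smul, h1, sub_self]
      rcases smul_eq_zero.mp heq with h | h
      · have hfac : ω ^ 2 * (1 - ω) * (1 + ω) = 0 := by linear_combination h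
        rcases mul_eq_zero.mp hfac with h' | h'
        · rcases mul_eq_zero.mp h' with h'' | h''
          · exact hω0 (pow_eq_zero_iff (by norm_num) |>.mp h'')
          · exact hω1 (sub_eq_zero.mp h'').symm
        · exact h1ω h'
      · exact hy0 h
    · push_neg at hcase
      obtain ⟨x, hx⟩ := hcase
      refine ⟨T.ρ sp x - ω ^ 2 • x, sub_ne_zero.mpr hx, ?_⟩
      rw [map_sub, map_smul, hquad]
      match_scalars
      · linear_combination hωq - (ω ^ 2 + ω) * h2k
      · linear_combination (ω - 1) * hωq + h2k
  have hv₂σ : T.ρ sp (T.ρ tt v₁) = ω ^ 2 • T.ρ tt v₁ := by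
    simp only [hst, hv₁σ, map_smul, smul_smul, ← pow_two]
  have hv₂0 : T.ρ tt v₁ ≠ 0 := by
    intro h
    apply hv₁0
    have := congrArg (T.ρ tt) h
    rw [hρtt2, map_zero] at this
    exact this
  refine ⟨v₁, T.ρ tt v₁, ?_, hv₁σ, hv₂σ, rfl, hρtt2 v₁⟩
  rw [linearIndependent_fin2]
  refine ⟨by simpa using hv₂0, ?_⟩
  intro a ha
  simp only [Matrix.cons_val_one, Matrix.head_cons, Matrix.cons_val_zero] at ha
  have e1 : (a * ω ^ 2) • T.ρ tt v₁ = ω • v₁ := by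
    rw [mul_smul, ← hv₂σ, ← map_smul, ha, hv₁σ]
  have e2 : (ω * a) • T.ρ tt v₁ = ω • v₁ := by
    rw [mul_smul, ha]
  have h2' : (a * ω ^ 2 - ω * a) • T.ρ tt v₁ = 0 := by
    rw [sub_smul, e1, e2, sub_self]
  rcases smul_eq_zero.mp h2' with h | h
  · have hfac : a * (ω * (ω - 1)) = 0 := by linear_combination h
    rcases mul_eq_zero.mp hfac with h' | h'
    · exact hv₁0 (by rw [← ha, h', zero_smul])
    · rcases mul_eq_zero.mp h' with h'' | h''
      · exact hω0 h''
      · exact hω1 (by linear_combination h'')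
  · exact hv₂0 h


end T1

lemma exists_coord (k : Type) [Field k] (V : Type) [AddCommGroup V] [Module k V]
    (h : Module.finrank k V = 1) :
    ∃ (e : V) (φ : V →ₗ[k] k), φ e = 1 ∧ ∀ w : V, w = φ w • e := by
  have : Module.Finite k V := Module.finite_of_finrank_eq_succ h
  let B := Module.finBasisOfFinrankEq k V h
  refine ⟨B 0, B.coord 0, by simp, ?_⟩
  intro w
  have h1 := B.sum_repr w
  rw [Fin.sum_univ_one] at h1
  rw [Basis.coord_apply]
  exact h1.symm

def oo : Equiv.Perm (Fin 4) := dd2 * sp * sp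

lemma hA4cases : ∀ p : Equiv.Perm (Fin 4), Equiv.Perm.sign p = 1 →
    (p = 1 ∨ p = dd1 ∨ p = dd2 ∨ p = dd1 * dd2 ∨ p = sp ∨ p = sp * dd1 ∨ p = sp * dd2 ∨
     p = sp * (dd1 * dd2) ∨ p = sp * sp ∨ p = sp * sp * dd1 ∨ p = sp * sp * dd2 ∨
     p = sp * sp * (dd1 * dd2)) := by decide

lemma odd_mul_tt (g : Equiv.Perm (Fin 4)) (h : g ∉ alternatingGroup (Fin 4)) :
    g * tt ∈ alternatingGroup (Fin 4) := by
  rw [Equiv.Perm.mem_alternatingGroup] at *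
  rcases Int.units_eq_one_or (Equiv.Perm.sign g) with h1 | h1
  · exact absurd h1 h
  · rw [map_mul, h1, show Equiv.Perm.sign tt = -1 from by decide]
    decide

instance : DecidablePred (· ∈ alternatingGroup (Fin 4)) := fun g =>
  decidable_of_iff _ (Equiv.Perm.mem_alternatingGroup (f := g)).symm

noncomputable def Fab {k : Type} [Field k] (E : GRep k ↥(alternatingGroup (Fin 4)))
    (χ : ↥(alternatingGroup (Fin 4)) → k) (e : E.V) (a b : k) :
    Equiv.Perm (Fin 4) → E.V := fun g =>
  if h : g ∈ alternatingGroup (Fin 4) then (a * χ ⟨g, h⟩) • e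
  else (b * χ ⟨g * tt, odd_mul_tt g h⟩) • e

lemma Fab_even {k : Type} [Field k] (E : GRep k ↥(alternatingGroup (Fin 4)))
    (χ : ↥(alternatingGroup (Fin 4)) → k) (e : E.V) (a b : k) {g : Equiv.Perm (Fin 4)}
    (h : g ∈ alternatingGroup (Fin 4)) : Fab E χ e a b g = (a * χ ⟨g, h⟩) • e := dif_pos h

lemma Fab_odd {k : Type} [Field k] (E : GRep k ↥(alternatingGroup (Fin 4)))
    (χ : ↥(alternatingGroup (Fin 4)) → k) (e : E.V) (a b : k) {g : Equiv.Perm (Fin 4)}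
    (h : g ∉ alternatingGroup (Fin 4)) :
    Fab E χ e a b g = (b * χ ⟨g * tt, odd_mul_tt g h⟩) • e := dif_neg h

lemma Fab_add {k : Type} [Field k] (E : GRep k ↥(alternatingGroup (Fin 4)))
    (χ : ↥(alternatingGroup (Fin 4)) → k) (e : E.V) (a b a' b' : k) :
    Fab E χ e (a + a') (b + b') = Fab E χ e a b + Fab E χ e a' b' := by
  funext g
  by_cases h : g ∈ alternatingGroup (Fin 4)
  · simp only [Pi.add_apply, Fab_even E χ e _ _ h, add_mul, add_smul]
  · simp only [Pi.add_apply, Fab_odd E χ e _ _ h, add_mul, add_smul]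

lemma Fab_smul {k : Type} [Field k] (E : GRep k ↥(alternatingGroup (Fin 4)))
    (χ : ↥(alternatingGroup (Fin 4)) → k) (e : E.V) (c a b : k) :
    Fab E χ e (c * a) (c * b) = c • Fab E χ e a b := by
  funext g
  by_cases h : g ∈ alternatingGroup (Fin 4)
  · simp only [Pi.smul_apply, Fab_even E χ e _ _ h, mul_assoc, mul_smul]
  · simp only [Pi.smul_apply, Fab_odd E χ e _ _ h, mul_assoc, mul_smul]

/-- For any non-trivial one-dimensional `kA₄`-module `E`, the induced
module `Ind_{A₄}^{S₄} E` is isomorphic to the unique 2-dimensional simple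
`kS₄`-module `T₁`. -/
theorem statement_15 (k : Type) [Field k] [IsAlgClosed k] [CharP k 2]
    (E : GRep k ↥(alternatingGroup (Fin 4)))
    (hdim : Module.finrank k E.V = 1)
    (hnontriv : ¬ ∀ (g : ↥(alternatingGroup (Fin 4))) (x : E.V), E.ρ g x = x) :
    ∀ (T₁ : GRep k (Equiv.Perm (Fin 4))), GRep.IsSimpleRep T₁ →
      Module.finrank k T₁.V = 2 →
      GRep.IsoRep (GRep.ind (alternatingGroup (Fin 4)) E) T₁ := by
  intro T₁ hsimp hT2
  have h2k : (2 : k) = 0 := CharTwo.two_eq_zero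
  -- elements of A4
  have hspA : sp ∈ alternatingGroup (Fin 4) := by
    rw [Equiv.Perm.mem_alternatingGroup]; decide
  have hd1A : dd1 ∈ alternatingGroup (Fin 4) := by
    rw [Equiv.Perm.mem_alternatingGroup]; decide
  have hd2A : dd2 ∈ alternatingGroup (Fin 4) := by
    rw [Equiv.Perm.mem_alternatingGroup]; decide
  have httA : tt ∉ alternatingGroup (Fin 4) := by
    rw [Equiv.Perm.mem_alternatingGroup]; decide
  set σa : ↥(alternatingGroup (Fin 4)) := ⟨sp, hspA⟩ with hσa
  set da1 : ↥(alternatingGroup (Fin 4)) := ⟨dd1, hd1A⟩ with hda1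
  set da2 : ↥(alternatingGroup (Fin 4)) := ⟨dd2, hd2A⟩ with hda2
  -- coordinates on E
  obtain ⟨e, φ, hφe, hrep⟩ := exists_coord k E.V hdim
  have he0 : e ≠ 0 := by
    intro h
    rw [h, map_zero] at hφe
    exact zero_ne_one hφe
  set χ : ↥(alternatingGroup (Fin 4)) → k := fun a => φ (E.ρ a e) with hχdef
  have hχe : ∀ a : ↥(alternatingGroup (Fin 4)), E.ρ a e = χ a • e := fun a => hrep _
  have hχ : ∀ (a : ↥(alternatingGroup (Fin 4))) (w : E.V), E.ρ a w = χ a • w := by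
    intro a w
    calc E.ρ a w = E.ρ a (φ w • e) := by rw [← hrep w]
    _ = φ w • E.ρ a e := map_smul _ _ _
    _ = φ w • χ a • e := by rw [hχe]
    _ = χ a • (φ w • e) := smul_comm _ _ _
    _ = χ a • w := by rw [← hrep w]
  have hcancel : ∀ c d : k, c • e = d • e → c = d := by
    intro c d h
    exact smul_left_injective k he0 h
  have hχmul : ∀ a b : ↥(alternatingGroup (Fin 4)), χ (a * b) = χ a * χ b := by
    intro a b
    apply hcancel
    rw [← hχe, GRep.ρ_mul_apply, hχ b, map_smul, hχe, smul_smul, mul_comm (χ b)]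
  have hχ1 : χ 1 = 1 := by
    apply hcancel
    rw [← hχe, map_one, one_smul]
    rfl
  have hχinv : ∀ a : ↥(alternatingGroup (Fin 4)), a * a = 1 → χ a = 1 := by
    intro a ha
    have hsq : χ a * χ a = 1 := by rw [← hχmul, ha, hχ1]
    have hz : (χ a - 1) ^ 2 = 0 := by linear_combination hsq + (1 - χ a) * h2k
    have := pow_eq_zero_iff (n := 2) (by norm_num) |>.mp hz
    rw [sub_eq_zero] at this
    exact this
  have hχd1 : χ da1 = 1 := hχinv da1 (Subtype.ext (show dd1 * dd1 = 1 by decide))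
  have hχd2 : χ da2 = 1 := hχinv da2 (Subtype.ext (show dd2 * dd2 = 1 by decide))
  have hχd3 : χ (da1 * da2) = 1 := by rw [hχmul, hχd1, hχd2, one_mul]
  set ω : k := χ σa with hωdef
  have hω3 : ω * ω * ω = 1 := by
    rw [hωdef, ← hχmul, ← hχmul, show σa * σa * σa = 1 from Subtype.ext (show sp * sp * sp = 1 by decide), hχ1]
  have hω0 : ω ≠ 0 := by
    intro h
    rw [h] at hω3
    simp at hω3
  have hωne1 : ω ≠ 1 := by
    intro hω
    apply hnontriv
    intro g x
    suffices hχg : χ g = 1 by rw [hχ, hχg, one_smul]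
    rcases g with ⟨p, hp⟩
    have hp' : Equiv.Perm.sign p = 1 := Equiv.Perm.mem_alternatingGroup.mp hp
    have hd := hA4cases p hp'
    rcases hd with h1|h1|h1|h1|h1|h1|h1|h1|h1|h1|h1|h1 <;> subst h1
    · exact hχ1
    · exact hχd1
    · exact hχd2
    · exact hχd3
    · exact hω
    · show χ (σa * da1) = 1
      rw [hχmul, ← hωdef, hω, hχd1, one_mul]
    · show χ (σa * da2) = 1
      rw [hχmul, ← hωdef, hω, hχd2, one_mul]
    · show χ (σa * (da1 * da2)) = 1
      rw [hχmul, ← hωdef, hω, hχd3, one_mul]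
    · show χ (σa * σa) = 1
      rw [hχmul, ← hωdef, hω, one_mul]
    · show χ (σa * σa * da1) = 1
      rw [hχmul, hχmul, ← hωdef, hω, hχd1, one_mul, one_mul]
    · show χ (σa * σa * da2) = 1
      rw [hχmul, hχmul, ← hωdef, hω, hχd2, one_mul, one_mul]
    · show χ (σa * σa * (da1 * da2)) = 1
      rw [hχmul, hχmul, ← hωdef, hω, hχd3, one_mul, one_mul]
  have hωq : ω ^ 2 + ω + 1 = 0 := by
    have hfac : (ω - 1) * (ω ^ 2 + ω + 1) = 0 := by linear_combination hω3
    rcases mul_eq_zero.mp hfac with h | h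
    · exact absurd (by linear_combination h) hωne1
    · exact h
  -- structure of T₁
  obtain ⟨v₁, v₂, li, hv1, hv2, ht1, ht2⟩ := T1_structure T₁ hsimp hT2 ω hωne1 hω0 hωq
  have hFD : Module.Finite k T₁.V := Module.finite_of_finrank_eq_succ hT2
  have hcard : Fintype.card (Fin 2) = Module.finrank k T₁.V := by simp [hT2]
  set B : Basis (Fin 2) k T₁.V := basisOfLinearIndependentOfCardEqFinrank li hcard with hBdef
  have hB0 : B 0 = v₁ := by
    rw [hBdef, coe_basisOfLinearIndependentOfCardEqFinrank]
    rfl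
  have hB1 : B 1 = v₂ := by
    rw [hBdef, coe_basisOfLinearIndependentOfCardEqFinrank]
    rfl
  -- the odd coset representative element oo and its character value
  have hooA : oo ∈ alternatingGroup (Fin 4) := by
    rw [Equiv.Perm.mem_alternatingGroup]; decide
  set oa : ↥(alternatingGroup (Fin 4)) := ⟨oo, hooA⟩ with hoa
  have hχoo : χ oa = ω * ω := by
    rw [show oa = da2 * σa * σa from rfl, hχmul, hχmul, hχd2, one_mul, ← hωdef]
  have h1A : (1 : Equiv.Perm (Fin 4)) ∈ alternatingGroup (Fin 4) := one_mem _
  -- membership of Fab in the induced carrier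
  have hmemF : ∀ a b : k, Fab E χ e a b ∈ GRep.indCarrier (alternatingGroup (Fin 4)) E := by
    intro a b l g
    by_cases hg : g ∈ alternatingGroup (Fin 4)
    · have hlg : (l : Equiv.Perm (Fin 4)) * g ∈ alternatingGroup (Fin 4) := mul_mem l.2 hg
      rw [Fab_even E χ e _ _ hlg, Fab_even E χ e _ _ hg,
        show (⟨(l : Equiv.Perm (Fin 4)) * g, hlg⟩ : ↥(alternatingGroup (Fin 4)))
          = l * ⟨g, hg⟩ from rfl, hχmul, hχ l, smul_smul]
      congr 1
      ring
    · have hlg : (l : Equiv.Perm (Fin 4)) * g ∉ alternatingGroup (Fin 4) := by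
        intro hmem
        apply hg
        have h5 := mul_mem (inv_mem l.2) hmem
        rwa [inv_mul_cancel_left] at h5
      rw [Fab_odd E χ e _ _ hlg, Fab_odd E χ e _ _ hg,
        show (⟨(l : Equiv.Perm (Fin 4)) * g * tt, odd_mul_tt _ hlg⟩ :
            ↥(alternatingGroup (Fin 4)))
          = l * ⟨g * tt, odd_mul_tt g hg⟩ from Subtype.ext (mul_assoc _ _ _),
        hχmul, hχ l, smul_smul]
      congr 1
      ring
  -- the two linear maps
  set Φ : (GRep.ind (alternatingGroup (Fin 4)) E).V →ₗ[k] T₁.V := {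
    toFun := fun f => φ (f.1 1) • v₁ + φ (f.1 tt) • v₂
    map_add' := by
      intro f g
      show φ ((f.1 + g.1) 1) • v₁ + φ ((f.1 + g.1) tt) • v₂ = _
      simp only [Pi.add_apply, map_add, add_smul]
      abel
    map_smul' := by
      intro c f
      show φ ((c • f.1) 1) • v₁ + φ ((c • f.1) tt) • v₂ = _
      simp only [Pi.smul_apply, map_smul, smul_eq_mul, mul_smul, RingHom.id_apply, smul_add]
  } with hΦ
  have hΦapp : ∀ f : (GRep.ind (alternatingGroup (Fin 4)) E).V,
      Φ f = φ (f.1 1) • v₁ + φ (f.1 tt) • v₂ := fun f => rfl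
  set Ψ : T₁.V →ₗ[k] (GRep.ind (alternatingGroup (Fin 4)) E).V := {
    toFun := fun x => ⟨Fab E χ e (B.repr x 0) (B.repr x 1), hmemF _ _⟩
    map_add' := by
      intro x y
      apply Subtype.ext
      show Fab E χ e (B.repr (x + y) 0) (B.repr (x + y) 1) = _
      rw [map_add, Finsupp.add_apply, Finsupp.add_apply, Fab_add]
      rfl
    map_smul' := by
      intro c x
      apply Subtype.ext
      show Fab E χ e (B.repr (c • x) 0) (B.repr (c • x) 1) = _
      rw [map_smul, Finsupp.smul_apply, Finsupp.smul_apply, smul_eq_mul, smul_eq_mul, Fab_smul]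
      rfl
  } with hΨ
  -- Fab values at 1 and tt
  have hFab1 : ∀ a b : k, φ (Fab E χ e a b 1) = a := by
    intro a b
    rw [Fab_even E χ e _ _ h1A, show (⟨(1 : Equiv.Perm (Fin 4)), h1A⟩ :
      ↥(alternatingGroup (Fin 4))) = 1 from rfl, hχ1, mul_one, map_smul, hφe, smul_eq_mul,
      mul_one]
  have hFabtt : ∀ a b : k, φ (Fab E χ e a b tt) = b := by
    intro a b
    rw [Fab_odd E χ e _ _ httA, show (⟨tt * tt, odd_mul_tt tt httA⟩ :
      ↥(alternatingGroup (Fin 4))) = 1 from Subtype.ext (show tt * tt = 1 by decide),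
      hχ1, mul_one, map_smul, hφe, smul_eq_mul, mul_one]
  have hrepr0 : ∀ a b : k, B.repr (a • v₁ + b • v₂) 0 = a := by
    intro a b
    rw [← hB0, ← hB1]
    simp [Finsupp.single_apply]
  have hrepr1 : ∀ a b : k, B.repr (a • v₁ + b • v₂) 1 = b := by
    intro a b
    rw [← hB0, ← hB1]
    simp [Finsupp.single_apply]
  have hΦΨ : Φ.comp Ψ = LinearMap.id := by
    ext x
    show Φ (Ψ x) = x
    rw [hΨ]
    show φ (Fab E χ e (B.repr x 0) (B.repr x 1) 1) • v₁ + φ (Fab E χ e (B.repr x 0) (B.repr x 1) tt) • v₂ = x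
    rw [hFab1, hFabtt]
    have h6 := B.sum_repr x
    rw [Fin.sum_univ_two, hB0, hB1] at h6
    exact h6
  have hΨΦ : Ψ.comp Φ = LinearMap.id := by
    ext f
    show Ψ (Φ f) = f
    apply Subtype.ext
    rw [hΨ]
    show Fab E χ e (B.repr (Φ f) 0) (B.repr (Φ f) 1) = f.1
    rw [hΦapp, hrepr0, hrepr1]
    funext g
    by_cases hg : g ∈ alternatingGroup (Fin 4)
    · rw [Fab_even E χ e _ _ hg]
      have hfg := f.2 ⟨g, hg⟩ 1
      rw [mul_one] at hfg
      rw [hfg, hχ]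
      conv_rhs => rw [hrep (f.1 1)]
      rw [smul_smul]
      congr 1
      ring
    · rw [Fab_odd E χ e _ _ hg]
      have hfg := f.2 ⟨g * tt, odd_mul_tt g hg⟩ tt
      rw [show g * tt * tt = g from by
        rw [mul_assoc, show tt * tt = 1 from by decide, mul_one]] at hfg
      rw [hfg, hχ]
      conv_rhs => rw [hrep (f.1 tt)]
      rw [smul_smul]
      congr 1
      ring
  refine ⟨LinearEquiv.ofLinear Φ Ψ hΦΨ hΨΦ, ?_⟩
  apply GRep.isRepHom_of_closure _ _ _ _ closure_sp_tt
  intro g hg f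
  rcases hg with hg | hg
  · subst hg
    show Φ ((GRep.ind (alternatingGroup (Fin 4)) E).ρ sp f) = T₁.ρ sp (Φ f)
    rw [hΦapp, hΦapp]
    have e1 : ((GRep.ind (alternatingGroup (Fin 4)) E).ρ sp f).1 1 = f.1 (1 * sp) := rfl
    have e2 : ((GRep.ind (alternatingGroup (Fin 4)) E).ρ sp f).1 tt = f.1 (tt * sp) := rfl
    have h4 := f.2 σa 1
    rw [mul_one] at h4
    have h4' : f.1 sp = E.ρ σa (f.1 1) := h4
    have h3' : f.1 (oo * tt) = E.ρ oa (f.1 tt) := f.2 oa tt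
    rw [e1, e2, one_mul, show tt * sp = oo * tt from by decide, h4', h3', hχ, hχ, hχoo,
      ← hωdef, map_add]
    simp only [map_smul]
    rw [hv1, hv2]
    match_scalars <;> (simp only [smul_eq_mul]; ring)
  · simp only [Set.mem_singleton_iff] at hg
    subst hg
    show Φ ((GRep.ind (alternatingGroup (Fin 4)) E).ρ tt f) = T₁.ρ tt (Φ f)
    rw [hΦapp, hΦapp]
    have e1 : ((GRep.ind (alternatingGroup (Fin 4)) E).ρ tt f).1 1 = f.1 (1 * tt) := rfl
    have e2 : ((GRep.ind (alternatingGroup (Fin 4)) E).ρ tt f).1 tt = f.1 (tt * tt) := rfl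
    rw [e1, e2, one_mul, show tt * tt = 1 from by decide, map_add, map_smul, map_smul,
      ht1, ht2]
    abel
end
end
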